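/- Let μ be a Borel probability measure on ℝ supported on [0,∞) (i.e., μ((−∞,0)) = 0) with finite mean ∫ x dμ(x) < ∞, let π ≥ 0, and let G : ℝ → ℝ be concave, nondecreasing, and π-Lipschitz. Define H(z) = ∫ ( G(max(z − x, 0)) − π·max(x − z, 0) ) dμ(x). Then H is well defined (the integrand is μ-integrable for every z), concave on ℝ, nondecreasing on ℝ, and π-Lipschitz. -/

import Mathlib

open MeasureTheory

/-- Preservation of structure through the consumption step: for demand
distribution `μ` supported on `[0,∞)` with finite mean, overage price `π ≥ 0`,
and a continuation value `G` which is concave, nondecreasing, and `π`-Lipschitz,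
the function `H z = ∫ (G((z-x)⁺) - π·(x-z)⁺) dμ` is well defined, concave,
nondecreasing, and `π`-Lipschitz. -/
theorem consumption_step_preservation
    (μ : Measure ℝ) [IsProbabilityMeasure μ]
    (hsupp : μ (Set.Iio 0) = 0)
    (hmean : Integrable (fun x => x) μ)
    (π : ℝ) (hπ : 0 ≤ π)
    (G : ℝ → ℝ)
    (hGconc : ConcaveOn ℝ Set.univ G)
    (hGmono : Monotone G)
    (hGlip : ∀ a b : ℝ, |G a - G b| ≤ π * |a - b|)
    (H : ℝ → ℝ)
    (hH : ∀ z, H z = ∫ x, (G (max (z - x) 0) - π * max (x - z) 0) ∂μ) :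
    (∀ z : ℝ, Integrable (fun x => G (max (z - x) 0) - π * max (x - z) 0) μ) ∧
    ConcaveOn ℝ Set.univ H ∧ Monotone H ∧
      ∀ z z' : ℝ, |H z - H z'| ≤ π * |z - z'| := by
  -- key pointwise identity
  have hkey : ∀ z x : ℝ, G (max (z - x) 0) - π * max (x - z) 0
      = min (G (z - x)) (G 0 + π * (z - x)) := by
    intro z x
    rcases le_total x z with h | h
    · have h1 : max (z - x) 0 = z - x := max_eq_left (by linarith)
      have h2 : max (x - z) 0 = 0 := max_eq_right (by linarith)
      rw [h1, h2, mul_zero, sub_zero, min_eq_left]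
      have hl := abs_le.mp (hGlip (z - x) 0)
      have habs : |z - x - 0| = z - x := by
        rw [sub_zero, abs_of_nonneg (by linarith)]
      rw [habs] at hl
      linarith [hl.2]
    · have h1 : max (z - x) 0 = 0 := max_eq_right (by linarith)
      have h2 : max (x - z) 0 = x - z := max_eq_left (by linarith)
      rw [h1, h2, min_eq_right]
      · ring
      · have hl := abs_le.mp (hGlip (z - x) 0)
        have habs : |z - x - 0| = -(z - x) := by
          rw [sub_zero, abs_of_nonpos (by linarith)]
        rw [habs] at hl
        linarith [hl.1]
  have hGcont : Continuous G := by
    have : LipschitzWith ⟨π, hπ⟩ G :=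
      LipschitzWith.of_dist_le_mul (fun a b => by
        rw [Real.dist_eq, Real.dist_eq]; exact hGlip a b)
    exact this.continuous
  -- integrability
  have hint : ∀ z : ℝ, Integrable (fun x => G (max (z - x) 0) - π * max (x - z) 0) μ := by
    intro z
    have hmeas : AEStronglyMeasurable (fun x => G (max (z - x) 0) - π * max (x - z) 0) μ := by
      apply Continuous.aestronglyMeasurable
      fun_prop
    have hbd : Integrable (fun x : ℝ => |G 0| + π * |z| + π * |x|) μ :=
      (integrable_const _).add (hmean.abs.const_mul π)
    refine hbd.mono hmeas (Filter.Eventually.of_forall fun x => ?_)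
    rw [Real.norm_eq_abs, Real.norm_eq_abs, hkey]
    refine le_trans ?_ (le_abs_self _)
    have hlz : |G (z - x) - G 0| ≤ π * |z - x| := by
      simpa using hGlip (z - x) 0
    have hzx : |z - x| ≤ |z| + |x| := abs_sub _ _
    have h1 : |G (z - x)| ≤ |G 0| + π * |z| + π * |x| := by
      have := abs_sub_abs_le_abs_sub (G (z - x)) (G 0)
      nlinarith
    have h2 : |G 0 + π * (z - x)| ≤ |G 0| + π * |z| + π * |x| := by
      have h3 := abs_add_le (G 0) (π * (z - x))
      rw [abs_mul, abs_of_nonneg hπ] at h3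
      nlinarith
    calc |min (G (z - x)) (G 0 + π * (z - x))|
        ≤ max |G (z - x)| |G 0 + π * (z - x)| := abs_min_le_max_abs_abs
      _ ≤ |G 0| + π * |z| + π * |x| := max_le h1 h2
  refine ⟨hint, ?_, ?_, ?_⟩
  · -- concavity
    refine ⟨convex_univ, fun z _ z' _ a b ha hb hab => ?_⟩
    simp only [smul_eq_mul, hH]
    have hle : ∀ x : ℝ,
        a * (G (max (z - x) 0) - π * max (x - z) 0)
          + b * (G (max (z' - x) 0) - π * max (x - z') 0)
        ≤ G (max (a * z + b * z' - x) 0) - π * max (x - (a * z + b * z')) 0 := by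
      intro x
      rw [hkey, hkey, hkey]
      have hGc : a * G (z - x) + b * G (z' - x) ≤ G (a * z + b * z' - x) := by
        have h := hGconc.2 (Set.mem_univ (z - x)) (Set.mem_univ (z' - x)) ha hb hab
        have hsum : a • (z - x) + b • (z' - x) = a * z + b * z' - x := by
          simp only [smul_eq_mul]; linear_combination (-x) * hab
        rw [hsum] at h
        simpa using h
      have h2 : a * (G 0 + π * (z - x)) + b * (G 0 + π * (z' - x))
          = G 0 + π * (a * z + b * z' - x) := by
        linear_combination (G 0 - π * x) * hab
      refine le_min ?_ ?_
      · calc a * min (G (z - x)) (G 0 + π * (z - x))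
              + b * min (G (z' - x)) (G 0 + π * (z' - x))
            ≤ a * G (z - x) + b * G (z' - x) := by
              gcongr <;> [exact min_le_left _ _; exact min_le_left _ _]
          _ ≤ G (a * z + b * z' - x) := hGc
      · calc a * min (G (z - x)) (G 0 + π * (z - x))
              + b * min (G (z' - x)) (G 0 + π * (z' - x))
            ≤ a * (G 0 + π * (z - x)) + b * (G 0 + π * (z' - x)) := by
              gcongr <;> [exact min_le_right _ _; exact min_le_right _ _]
          _ = G 0 + π * (a * z + b * z' - x) := h2
    calc a * ∫ x, (G (max (z - x) 0) - π * max (x - z) 0) ∂μ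
          + b * ∫ x, (G (max (z' - x) 0) - π * max (x - z') 0) ∂μ
        = ∫ x, (a * (G (max (z - x) 0) - π * max (x - z) 0)
            + b * (G (max (z' - x) 0) - π * max (x - z') 0)) ∂μ := by
          rw [integral_add ((hint z).const_mul a) ((hint z').const_mul b),
            integral_const_mul, integral_const_mul]
      _ ≤ ∫ x, (G (max (a * z + b * z' - x) 0) - π * max (x - (a * z + b * z')) 0) ∂μ :=
          integral_mono (((hint z).const_mul a).add ((hint z').const_mul b))
            (hint _) hle
  · -- monotone
    intro z z' h
    rw [hH, hH]
    refine integral_mono (hint z) (hint z') fun x => ?_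
    rw [hkey, hkey]
    exact min_le_min (hGmono (by linarith)) (by nlinarith)
  · -- Lipschitz
    intro z z'
    have hd : H z - H z' = ∫ x, ((G (max (z - x) 0) - π * max (x - z) 0)
        - (G (max (z' - x) 0) - π * max (x - z') 0)) ∂μ := by
      rw [hH, hH, integral_sub (hint z) (hint z')]
    rw [hd]
    calc |∫ x, ((G (max (z - x) 0) - π * max (x - z) 0)
            - (G (max (z' - x) 0) - π * max (x - z') 0)) ∂μ|
        ≤ ∫ x, |(G (max (z - x) 0) - π * max (x - z) 0)
            - (G (max (z' - x) 0) - π * max (x - z') 0)| ∂μ := by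
          simpa [Real.norm_eq_abs] using
            norm_integral_le_integral_norm (μ := μ) (f := fun x =>
              (G (max (z - x) 0) - π * max (x - z) 0)
                - (G (max (z' - x) 0) - π * max (x - z') 0))
      _ ≤ ∫ _x, π * |z - z'| ∂μ := by
          refine integral_mono ((hint z).sub (hint z')).abs (integrable_const _) fun x => ?_
          rw [hkey, hkey]
          refine le_trans (abs_min_sub_min_le_max _ _ _ _) (max_le ?_ ?_)
          · have := hGlip (z - x) (z' - x)
            simpa [show z - x - (z' - x) = z - z' by ring] using this
          · have heq : G 0 + π * (z - x) - (G 0 + π * (z' - x)) = π * (z - z') := by ring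
            rw [heq, abs_mul, abs_of_nonneg hπ]
      _ = π * |z - z'| := by simp
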